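/- arXiv:1101.3898 — 3 statements merged into one kernel-verified Lean document; each statement's English description precedes it below -/
import Mathlib

section
/- For complex numbers z, w and real numbers p, q > 1 with 1/p + 1/q = 1, one has |z + w|² ≤ p|z|² + q|w|², with equality if and only if w = (p-1)z. -/
/-- **Classical Bohr inequality.** For complex `z, w` and real `p, q > 1` with
`1/p + 1/q = 1`, one has `|z + w|² ≤ p|z|² + q|w|²`, with equality iff `w = (p-1)z`. -/
theorem bohr_inequality (z w : ℂ) (p q : ℝ) (hp : 1 < p) (hq : 1 < q)
    (hpq : 1 / p + 1 / q = 1) :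
    ‖z + w‖ ^ 2 ≤ p * ‖z‖ ^ 2 + q * ‖w‖ ^ 2 ∧
    (‖z + w‖ ^ 2 = p * ‖z‖ ^ 2 + q * ‖w‖ ^ 2 ↔
      w = (p - 1 : ℂ) * z) := by
  have hp0 : (0:ℝ) < p - 1 := by linarith
  have hp1 : (0:ℝ) < p := by linarith
  have hq1 : (0:ℝ) < q := by linarith
  have hq' : q = p / (p - 1) := by
    field_simp at hpq ⊢
    nlinarith
  have key : p * Complex.normSq z + q * Complex.normSq w - Complex.normSq (z + w)
      = Complex.normSq (((p - 1 : ℝ) : ℂ) * z - w) / (p - 1) := by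
    subst hq'
    simp only [Complex.normSq_apply, Complex.add_re, Complex.add_im, Complex.sub_re,
      Complex.sub_im, Complex.mul_re, Complex.mul_im, Complex.ofReal_re, Complex.ofReal_im]
    field_simp
    ring
  have hsq : ∀ u : ℂ, ‖u‖ ^ 2 = Complex.normSq u := fun u => Complex.sq_norm u
  have hcast : ((p - 1 : ℝ) : ℂ) = (p - 1 : ℂ) := by push_cast; ring
  constructor
  · have h1 : 0 ≤ Complex.normSq (((p - 1 : ℝ) : ℂ) * z - w) / (p - 1) :=
      div_nonneg (Complex.normSq_nonneg _) (le_of_lt hp0)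
    rw [hsq, hsq, hsq]
    linarith
  · rw [hsq, hsq, hsq]
    constructor
    · intro h
      have h2 : Complex.normSq (((p - 1 : ℝ) : ℂ) * z - w) / (p - 1) = 0 := by linarith
      field_simp at h2
      have := sub_eq_zero.mp (Complex.normSq_eq_zero.mp (by simpa using h2))
      push_cast at this
      exact this.symm
    · intro h
      have h0 : ((p - 1 : ℝ) : ℂ) * z - w = 0 := by
        rw [hcast, h]; ring
      have : Complex.normSq (((p - 1 : ℝ) : ℂ) * z - w) = 0 := by rw [h0]; simp
      rw [this] at key
      simp at key
      linarith
end

section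
/- Let z₁, …, z_m be complex numbers, p₁, …, p_m > 0 real numbers, and r > 1. Then |∑_{j=1}^m z_j|^r ≤ (∑_{j=1}^m p_j^{1/(1-r)})^{r-1} · ∑_{j=1}^m p_j |z_j|^r. -/
/-- **Vasić–Kečkić inequality.** For complex `z₁,…,z_m`, positive reals `p₁,…,p_m`
and `r > 1`, `|∑ z_j|^r ≤ (∑ p_j^{1/(1-r)})^{r-1} · ∑ p_j |z_j|^r`. -/
theorem vasic_keckic_inequality (m : ℕ) (z : Fin m → ℂ) (p : Fin m → ℝ)
    (hp : ∀ j, 0 < p j) (r : ℝ) (hr : 1 < r) :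
    ‖∑ j, z j‖ ^ r ≤
      (∑ j, p j ^ (1 / (1 - r))) ^ (r - 1) * ∑ j, p j * ‖z j‖ ^ r := by
  have hr0 : 0 < r := lt_trans one_pos hr
  have hr1 : (1 : ℝ) - r ≠ 0 := by linarith
  set w : Fin m → ℝ := fun j => p j ^ (1 / (1 - r)) with hw
  set f : Fin m → ℝ := fun j => ‖z j‖ / w j with hf
  have hwpos : ∀ j, 0 < w j := fun j => Real.rpow_pos_of_pos (hp j) _
  have hwf : ∀ j, w j * f j = ‖z j‖ := by
    intro j
    simp only [hf]
    rw [mul_comm, div_mul_cancel₀ _ (hwpos j).ne']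
  have hwp : ∀ j, w j ^ (1 - r) = p j := by
    intro j
    show (p j ^ (1 / (1 - r))) ^ (1 - r) = p j
    rw [← Real.rpow_mul (hp j).le, one_div, inv_mul_cancel₀ hr1, Real.rpow_one]
  have hwfr : ∀ j, w j * f j ^ r = p j * ‖z j‖ ^ r := by
    intro j
    have hwr : w j ^ r ≠ 0 := (Real.rpow_pos_of_pos (hwpos j) r).ne'
    have key2 : w j * f j ^ r = w j ^ (1 - r) * ‖z j‖ ^ r := by
      simp only [hf]
      rw [Real.div_rpow (norm_nonneg _) (hwpos j).le,
        Real.rpow_sub (hwpos j), Real.rpow_one]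
      field_simp
    rw [key2, hwp]
  have key := Real.inner_le_weight_mul_Lp_of_nonneg Finset.univ hr.le w f
    (fun j => (hwpos j).le) (fun j => div_nonneg (norm_nonneg _) (hwpos j).le)
  simp only [hwf, hwfr] at key
  have h1 : ‖∑ j, z j‖ ≤ ∑ j, ‖z j‖ :=
    norm_sum_le Finset.univ z
  have hSW : (0:ℝ) ≤ ∑ j, w j := Finset.sum_nonneg fun j _ => (hwpos j).le
  have hSP : (0:ℝ) ≤ ∑ j, p j * ‖z j‖ ^ r :=
    Finset.sum_nonneg fun j _ =>
      mul_nonneg (hp j).le (Real.rpow_nonneg (norm_nonneg _) r)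
  calc ‖∑ j, z j‖ ^ r
      ≤ (∑ j, ‖z j‖) ^ r :=
        Real.rpow_le_rpow (norm_nonneg _) h1 hr0.le
    _ ≤ ((∑ j, w j) ^ (1 - r⁻¹) * (∑ j, p j * ‖z j‖ ^ r) ^ r⁻¹) ^ r := by
        apply Real.rpow_le_rpow _ key hr0.le
        exact Finset.sum_nonneg fun j _ => norm_nonneg _
    _ = (∑ j, w j) ^ (r - 1) * ∑ j, p j * ‖z j‖ ^ r := by
        rw [Real.mul_rpow (Real.rpow_nonneg hSW _) (Real.rpow_nonneg hSP _),
          ← Real.rpow_mul hSW, ← Real.rpow_mul hSP, inv_mul_cancel₀ hr0.ne',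
          Real.rpow_one]
        congr 2
        field_simp
end

section
/- Let A be an n×n Hermitian matrix with spectrum contained in an interval J containing 0, and let f : J → ℝ be convex with f(0) ≤ 0. Then for every vector x ∈ ℂⁿ with ‖x‖ ≤ 1, f(⟨Ax, x⟩) ≤ ⟨f(A)x, x⟩. -/
open Matrix ComplexOrder

noncomputable def matFun {n : ℕ} (f : ℝ → ℝ) (A : Matrix (Fin n) (Fin n) ℂ) :
    Matrix (Fin n) (Fin n) ℂ :=
  if hA : A.IsHermitian then
    (hA.eigenvectorUnitary : Matrix (Fin n) (Fin n) ℂ) *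
      Matrix.diagonal (fun i => (f (hA.eigenvalues i) : ℂ)) *
      (hA.eigenvectorUnitary : Matrix (Fin n) (Fin n) ℂ)ᴴ
  else 0

/-- `lam A j` : the `j`-th largest eigenvalue (0-indexed) of a Hermitian matrix `A`. -/
noncomputable def lam {n : ℕ} (A : Matrix (Fin n) (Fin n) ℂ) (j : ℕ) : ℝ :=
  if hA : A.IsHermitian then
    if h : j < n then (hA.eigenvalues ∘ Tuple.sort hA.eigenvalues) ((⟨j, h⟩ : Fin n).rev)
    else 0
  else 0

/-- Loewner order. -/
def loewnerLE {n : ℕ} (A B : Matrix (Fin n) (Fin n) ℂ) : Prop := (B - A).PosSemidef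

/-- `|B| = (B^* B)^{1/2}`. -/
noncomputable def matAbs {n : ℕ} (B : Matrix (Fin n) (Fin n) ℂ) : Matrix (Fin n) (Fin n) ℂ :=
  (Matrix.posSemidef_conjTranspose_mul_self B).isHermitian.eigenvectorUnitary.1 *
    Matrix.diagonal ((↑) ∘ (√·) ∘ (Matrix.posSemidef_conjTranspose_mul_self B).isHermitian.eigenvalues) *
    (star (Matrix.posSemidef_conjTranspose_mul_self B).isHermitian.eigenvectorUnitary : Matrix (Fin n) (Fin n) ℂ)

/-- `|B|^r` via functional calculus. -/
noncomputable def matAbsPow {n : ℕ} (B : Matrix (Fin n) (Fin n) ℂ) (r : ℝ) :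
    Matrix (Fin n) (Fin n) ℂ :=
  matFun (fun t => t ^ r) (matAbs B)

lemma quad_form {n : ℕ} (U : Matrix (Fin n) (Fin n) ℂ) (d : Fin n → ℝ) (x : Fin n → ℂ) :
    (star x ⬝ᵥ ((U * Matrix.diagonal (fun i => (d i : ℂ)) * Uᴴ) *ᵥ x)).re
      = ∑ i, d i * Complex.normSq ((Uᴴ *ᵥ x) i) := by
  set y := Uᴴ *ᵥ x with hy
  have h1 : (U * Matrix.diagonal (fun i => (d i : ℂ)) * Uᴴ) *ᵥ x
      = U *ᵥ (Matrix.diagonal (fun i => (d i : ℂ)) *ᵥ y) := by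
    simp [Matrix.mulVec_mulVec, Matrix.mul_assoc, hy]
  rw [h1, Matrix.dotProduct_mulVec]
  have h2 : star x ᵥ* U = star y := by
    rw [hy, Matrix.star_mulVec, Matrix.conjTranspose_conjTranspose]
  rw [h2]
  have h3 : star y ⬝ᵥ ((Matrix.diagonal fun i => ((d i : ℂ))) *ᵥ y)
      = ∑ i, (d i : ℂ) * ((starRingEnd ℂ) (y i) * y i) := by
    simp [dotProduct, Matrix.mulVec_diagonal]
    exact Finset.sum_congr rfl (fun i _ => by ring)
  rw [h3, Complex.re_sum]
  refine Finset.sum_congr rfl (fun i _ => ?_)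
  rw [← Complex.normSq_eq_conj_mul_self]
  simp [Complex.ofReal_mul]

/-- If `A` is Hermitian with spectrum in an interval `J ∋ 0` (the convex sets of `ℝ`
are exactly the intervals, and convexity of `J` is part of `ConvexOn`), `f` convex on
`J` with `f(0) ≤ 0`, then for every `x` with `‖x‖ ≤ 1`, `f(⟨Ax,x⟩) ≤ ⟨f(A)x,x⟩`. -/
theorem convex_inner_le {n : ℕ} (A : Matrix (Fin n) (Fin n) ℂ) (hA : A.IsHermitian)
    (J : Set ℝ) (h0 : (0 : ℝ) ∈ J) (f : ℝ → ℝ) (hf : ConvexOn ℝ J f) (hf0 : f 0 ≤ 0)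
    (hspec : ∀ i, hA.eigenvalues i ∈ J)
    (x : EuclideanSpace ℂ (Fin n)) (hx : ‖x‖ ≤ 1) :
    f ((star (x : Fin n → ℂ) ⬝ᵥ (A *ᵥ (x : Fin n → ℂ))).re) ≤
      (star (x : Fin n → ℂ) ⬝ᵥ (matFun f A *ᵥ (x : Fin n → ℂ))).re := by
  set U : Matrix (Fin n) (Fin n) ℂ := (hA.eigenvectorUnitary : Matrix (Fin n) (Fin n) ℂ) with hU
  set y : Fin n → ℂ := Uᴴ *ᵥ (x : Fin n → ℂ) with hy
  set w : Fin n → ℝ := fun i => Complex.normSq (y i) with hw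
  have hAeq : A = U * Matrix.diagonal (fun i => ((hA.eigenvalues i : ℝ) : ℂ)) * Uᴴ := by
    convert hA.spectral_theorem using 2
    rfl
  have hL : (star (x : Fin n → ℂ) ⬝ᵥ (A *ᵥ (x : Fin n → ℂ))).re
      = ∑ i, hA.eigenvalues i * w i := by
    have := quad_form U hA.eigenvalues (x : Fin n → ℂ)
    rw [← hAeq] at this; exact this
  have hR : (star (x : Fin n → ℂ) ⬝ᵥ (matFun f A *ᵥ (x : Fin n → ℂ))).re
      = ∑ i, f (hA.eigenvalues i) * w i := by
    rw [matFun, dif_pos hA]; exact quad_form U _ _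
  have hS : ∑ i, w i ≤ 1 := by
    have h1 : (∑ i, (1 : ℝ) * w i)
        = (star (x : Fin n → ℂ) ⬝ᵥ ((U * Matrix.diagonal (fun _ => ((1:ℝ) : ℂ)) * Uᴴ) *ᵥ (x : Fin n → ℂ))).re :=
      (quad_form U _ _).symm
    have h2 : U * Matrix.diagonal (fun _ : Fin n => ((1:ℝ) : ℂ)) * Uᴴ = 1 := by
      simp only [Complex.ofReal_one, Matrix.diagonal_one, Matrix.mul_one]
      exact Matrix.mem_unitaryGroup_iff.mp hA.eigenvectorUnitary.2
    have h3 : (star (x : Fin n → ℂ) ⬝ᵥ ((1 : Matrix (Fin n) (Fin n) ℂ) *ᵥ (x : Fin n → ℂ))).re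
        = ‖x‖ ^ 2 := by
      rw [Matrix.one_mulVec]
      have e1 : (star (x : Fin n → ℂ) ⬝ᵥ (x : Fin n → ℂ)).re
          = ∑ i, Complex.normSq ((x : Fin n → ℂ) i) := by
        rw [dotProduct, Complex.re_sum]
        refine Finset.sum_congr rfl fun i _ => ?_
        simp only [Pi.star_apply, Complex.star_def]
        rw [← Complex.normSq_eq_conj_mul_self]; simp
      rw [e1, EuclideanSpace.norm_eq, Real.sq_sqrt (by positivity)]
      refine Finset.sum_congr rfl fun i _ => ?_
      rw [← Complex.sq_norm]
    have h4 : ‖x‖ ^ 2 ≤ 1 := by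
      nlinarith [norm_nonneg x]
    calc ∑ i, w i = ∑ i, (1:ℝ) * w i := by simp
      _ = _ := by rw [h1, h2]
      _ = ‖x‖ ^ 2 := h3
      _ ≤ 1 := h4
  have hw0 : ∀ i ∈ Finset.univ, 0 ≤ w i := fun i _ => Complex.normSq_nonneg _
  have hjensen := hf.map_add_sum_le (t := Finset.univ) (w := w) (p := hA.eigenvalues)
    (v := 1 - ∑ i, w i) (q := 0) hw0 (by ring) (fun i _ => hspec i) (by linarith) h0
  rw [hL, hR]
  have hv : (0:ℝ) ≤ 1 - ∑ i, w i := by linarith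
  calc f (∑ i, hA.eigenvalues i * w i)
      = f ((1 - ∑ i, w i) • (0:ℝ) + ∑ i ∈ Finset.univ, w i • hA.eigenvalues i) := by
        congr 1; simp [mul_comm]
    _ ≤ (1 - ∑ i, w i) • f 0 + ∑ i ∈ Finset.univ, w i • f (hA.eigenvalues i) := hjensen
    _ ≤ ∑ i, f (hA.eigenvalues i) * w i := by
        have : (1 - ∑ i, w i) • f 0 ≤ 0 := by
          rw [smul_eq_mul]; exact mul_nonpos_of_nonneg_of_nonpos hv hf0
        have heq : ∑ i ∈ Finset.univ, w i • f (hA.eigenvalues i)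
            = ∑ i, f (hA.eigenvalues i) * w i := by
          exact Finset.sum_congr rfl (fun i _ => by rw [smul_eq_mul, mul_comm])
        linarith
end
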